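/- Suppose V[dQ(ℓ)/dℓ] ≥ c₂'² e^{−ηℓ} and the cost satisfies C(ℓ) ≥ c₃' e^{ηℓ} for some η > 0 and constants c₂', c₃' > 0, and let L ~ Exponential(r). If r ≥ η then E[(∫_0^{L} e^{rℓ} V[dQ(ℓ)/dℓ]^{1/2} dℓ)²] = +∞, and if r ≤ η then E[∫_0^{L} C(ℓ) dℓ] = +∞. Consequently for every r > 0, at least one of the variance of the untruncated (L_max = ∞) CLMC estimator or its expected cost is infinite, so their product is infinite. -/

import Mathlib

open MeasureTheory ProbabilityTheory Real ENNReal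

lemma measurable_expPDF (r : ℝ) : Measurable (exponentialPDF r) := by
  unfold exponentialPDF
  exact (measurable_exponentialPDFReal r).ennreal_ofReal

lemma integral_exp_mul' (a t : ℝ) (ha : a ≠ 0) :
    ∫ x in (0:ℝ)..t, Real.exp (a*x) = (Real.exp (a*t) - 1)/a := by
  rw [intervalIntegral.integral_comp_mul_left (fun x => Real.exp x) ha]
  simp [integral_exp, smul_eq_mul]
  field_simp

lemma half_bound {a c E : ℝ} (ha : 0 < a) (hc : 0 ≤ c) (hE : 2 ≤ E) :
    c/(2*a)*E ≤ c*((E-1)/a) := by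
  rw [div_mul_eq_mul_div, mul_div_assoc', div_le_div_iff₀ (by positivity) ha]
  nlinarith [mul_nonneg (mul_nonneg ha.le hc) (by linarith : (0:ℝ) ≤ E - 2)]

lemma lintegral_exp_law_top {Ω : Type*} [MeasurableSpace Ω] (μ : Measure Ω)
    (L : Ω → ℝ) (hLm : Measurable L) (r : ℝ) (hr : 0 < r)
    (hlaw : Measure.map L μ = expMeasure r)
    (g : ℝ → ℝ≥0∞) (hg : Measurable g)
    (s c M : ℝ) (hs : r ≤ s) (hc : 0 < c)
    (hglb : ∀ t, max M 0 ≤ t → ENNReal.ofReal (c * Real.exp (s * t)) ≤ g t) :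
    ∫⁻ ω, g (L ω) ∂μ = ⊤ := by
  have key : ∀ t ∈ Set.Ici (max M 0),
      ENNReal.ofReal (r * c) ≤ exponentialPDF r t * g t := by
    intro t ht
    have ht0 : (0:ℝ) ≤ t := le_trans (le_max_right M 0) ht
    rw [exponentialPDF_of_nonneg ht0]
    have e1 : Real.exp (-(r*t)) * Real.exp (s*t) = Real.exp ((s-r)*t) := by
      rw [← Real.exp_add]; ring_nf
    have e2 : (1:ℝ) ≤ Real.exp ((s-r)*t) :=
      Real.one_le_exp (by nlinarith)
    calc ENNReal.ofReal (r * c)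
        ≤ ENNReal.ofReal ((r * Real.exp (-(r*t))) * (c * Real.exp (s*t))) := by
          apply ENNReal.ofReal_le_ofReal
          have e3 : (r * Real.exp (-(r*t))) * (c * Real.exp (s*t))
              = r * c * Real.exp ((s-r)*t) := by rw [← e1]; ring
          nlinarith [mul_pos hr hc]
      _ = ENNReal.ofReal (r * Real.exp (-(r*t))) * ENNReal.ofReal (c * Real.exp (s*t)) := by
          rw [ENNReal.ofReal_mul (by positivity)]
      _ ≤ ENNReal.ofReal (r * Real.exp (-(r*t))) * g t :=
          mul_le_mul_right (hglb t ht) _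
  have h2 : (⊤:ℝ≥0∞) ≤ ∫⁻ t in Set.Ici (max M 0), exponentialPDF r t * g t := by
    calc (⊤:ℝ≥0∞) = ∫⁻ _ in Set.Ici (max M 0), ENNReal.ofReal (r * c) := by
          rw [setLIntegral_const, Real.volume_Ici, ENNReal.mul_top]
          simp only [ne_eq, ENNReal.ofReal_eq_zero, not_le]
          positivity
      _ ≤ _ := setLIntegral_mono ((measurable_expPDF r).mul hg) key
  refine top_unique ?_
  calc (⊤:ℝ≥0∞) ≤ ∫⁻ t in Set.Ici (max M 0), exponentialPDF r t * g t := h2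
    _ ≤ ∫⁻ t, exponentialPDF r t * g t := setLIntegral_le_lintegral _ _
    _ = ∫⁻ t, g t ∂(expMeasure r) := by
        rw [show expMeasure r = volume.withDensity (exponentialPDF r) from rfl,
          lintegral_withDensity_eq_lintegral_mul _ (measurable_expPDF r) hg]
        rfl
    _ = ∫⁻ ω, g (L ω) ∂μ := by rw [← hlaw, lintegral_map hg hLm]

/-- Corollary 2.4(b): if `V[dQ(ℓ)/dℓ] ≥ c₂'² e^{−ηℓ}` and `C(ℓ) ≥ c₃' e^{ηℓ}`, and
`L ~ Exponential(r)`, then for `r ≥ η` the second moment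
`E[(∫_0^L e^{rℓ} V[dQ(ℓ)/dℓ]^{1/2} dℓ)²]` is infinite, for `r ≤ η` the expected cost
`E[∫_0^L C(ℓ) dℓ]` is infinite, and consequently for every `r > 0` at least one of the
two is infinite. -/
theorem clmc_unbiased_infinite {Ω : Type*} [MeasurableSpace Ω] (μ : Measure Ω)
    [IsProbabilityMeasure μ] (dQ : ℝ → Ω → ℝ)
    (hjm : Measurable (Function.uncurry dQ)) (h2 : ∀ ℓ, MemLp (dQ ℓ) 2 μ)
    (L : Ω → ℝ) (hLm : Measurable L)
    (r η c₂' c₃' : ℝ) (hr : 0 < r) (hη : 0 < η) (hc₂ : 0 < c₂') (hc₃ : 0 < c₃')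
    (hlaw : Measure.map L μ = expMeasure r)
    (C : ℝ → ℝ) (hCm : Measurable C) (hC0 : ∀ ℓ, 0 ≤ C ℓ)
    (hvarlb : ∀ ℓ ≥ (0 : ℝ), c₂' ^ 2 * Real.exp (-(η * ℓ)) ≤ variance (dQ ℓ) μ)
    (hClb : ∀ ℓ ≥ (0 : ℝ), c₃' * Real.exp (η * ℓ) ≤ C ℓ)
    (hInt : ∀ a b : ℝ, IntervalIntegrable
      (fun ℓ => Real.exp (r * ℓ) * Real.sqrt (variance (dQ ℓ) μ)) volume a b) :
    (η ≤ r → ∫⁻ ω, ENNReal.ofReal ((∫ ℓ in (0 : ℝ)..(L ω),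
        Real.exp (r * ℓ) * Real.sqrt (variance (dQ ℓ) μ)) ^ 2) ∂μ = ⊤)
    ∧ (r ≤ η → ∫⁻ ω, (∫⁻ ℓ in Set.Ioc 0 (L ω), ENNReal.ofReal (C ℓ)) ∂μ = ⊤)
    ∧ ((∫⁻ ω, ENNReal.ofReal ((∫ ℓ in (0 : ℝ)..(L ω),
          Real.exp (r * ℓ) * Real.sqrt (variance (dQ ℓ) μ)) ^ 2) ∂μ = ⊤)
        ∨ (∫⁻ ω, (∫⁻ ℓ in Set.Ioc 0 (L ω), ENNReal.ofReal (C ℓ)) ∂μ = ⊤)) := by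
  have part1 : η ≤ r → ∫⁻ ω, ENNReal.ofReal ((∫ ℓ in (0 : ℝ)..(L ω),
      Real.exp (r * ℓ) * Real.sqrt (variance (dQ ℓ) μ)) ^ 2) ∂μ = ⊤ := by
    intro hηr
    set a : ℝ := r - η/2 with hadef
    have ha0 : 0 < a := by simp only [hadef]; linarith
    have hFc : Continuous (fun t => ∫ ℓ in (0:ℝ)..t,
        Real.exp (r * ℓ) * Real.sqrt (variance (dQ ℓ) μ)) :=
      intervalIntegral.continuous_primitive hInt 0
    refine lintegral_exp_law_top μ L hLm r hr hlaw
      (fun t => ENNReal.ofReal ((∫ ℓ in (0:ℝ)..t,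
        Real.exp (r * ℓ) * Real.sqrt (variance (dQ ℓ) μ)) ^ 2))
      ((hFc.pow 2).measurable.ennreal_ofReal)
      (2*a) ((c₂'/(2*a))^2) (Real.log 2 / a) (by simp only [hadef]; linarith)
      (by positivity) ?_
    intro t ht
    have ht0 : (0:ℝ) ≤ t := le_trans (le_max_right _ 0) ht
    have htM : Real.log 2 / a ≤ t := le_trans (le_max_left _ 0) ht
    have h2exp : (2:ℝ) ≤ Real.exp (a * t) := by
      rw [show (2:ℝ) = Real.exp (Real.log 2) from (Real.exp_log two_pos).symm]
      exact Real.exp_le_exp.mpr (by rw [div_le_iff₀ ha0] at htM; linarith)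
    have hlow : ∀ ℓ ∈ Set.Icc (0:ℝ) t,
        c₂' * Real.exp (a*ℓ) ≤ Real.exp (r*ℓ) * Real.sqrt (variance (dQ ℓ) μ) := by
      intro ℓ hℓ
      have hsq : c₂' * Real.exp (-(η*ℓ)/2) ≤ Real.sqrt (variance (dQ ℓ) μ) := by
        have h1 := Real.sqrt_le_sqrt (hvarlb ℓ hℓ.1)
        rwa [Real.sqrt_mul (sq_nonneg c₂'), Real.sqrt_sq hc₂.le,
          ← Real.exp_half (-(η*ℓ))] at h1
      have hkey : Real.exp (r*ℓ) * Real.exp (-(η*ℓ)/2) = Real.exp (a*ℓ) := by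
        rw [← Real.exp_add, hadef]; ring_nf
      calc c₂' * Real.exp (a*ℓ) = Real.exp (r*ℓ) * (c₂' * Real.exp (-(η*ℓ)/2)) := by
            rw [← hkey]; ring
        _ ≤ Real.exp (r*ℓ) * Real.sqrt (variance (dQ ℓ) μ) :=
            mul_le_mul_of_nonneg_left hsq (Real.exp_pos _).le
    have hFt : c₂'/(2*a) * Real.exp (a*t) ≤ ∫ ℓ in (0:ℝ)..t,
        Real.exp (r * ℓ) * Real.sqrt (variance (dQ ℓ) μ) := by
      have hcont : Continuous (fun ℓ => c₂' * Real.exp (a*ℓ)) :=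
        continuous_const.mul (Real.continuous_exp.comp (continuous_const.mul continuous_id))
      have hmono := intervalIntegral.integral_mono_on ht0
        (hcont.intervalIntegrable 0 t) (hInt 0 t) hlow
      have hcomp : ∫ ℓ in (0:ℝ)..t, c₂' * Real.exp (a*ℓ)
          = c₂' * ((Real.exp (a*t)-1)/a) := by
        rw [intervalIntegral.integral_const_mul, integral_exp_mul' a t ha0.ne']
      calc c₂'/(2*a) * Real.exp (a*t) ≤ c₂' * ((Real.exp (a*t)-1)/a) :=
            half_bound ha0 hc₂.le h2exp
        _ = ∫ ℓ in (0:ℝ)..t, c₂' * Real.exp (a*ℓ) := hcomp.symm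
        _ ≤ _ := hmono
    apply ENNReal.ofReal_le_ofReal
    have hsq2 : Real.exp (2*a*t) = Real.exp (a*t) * Real.exp (a*t) := by
      rw [← Real.exp_add]; ring_nf
    calc (c₂'/(2*a))^2 * Real.exp (2*a*t)
        = (c₂'/(2*a) * Real.exp (a*t))^2 := by rw [hsq2]; ring
      _ ≤ _ := pow_le_pow_left₀ (by positivity) hFt 2
  have part2 : r ≤ η → ∫⁻ ω, (∫⁻ ℓ in Set.Ioc 0 (L ω), ENNReal.ofReal (C ℓ)) ∂μ = ⊤ := by
    intro hrη
    have hgmono : Monotone (fun t => ∫⁻ ℓ in Set.Ioc 0 t, ENNReal.ofReal (C ℓ)) :=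
      fun x y hxy => lintegral_mono_set (Set.Ioc_subset_Ioc_right hxy)
    refine lintegral_exp_law_top μ L hLm r hr hlaw
      (fun t => ∫⁻ ℓ in Set.Ioc 0 t, ENNReal.ofReal (C ℓ)) hgmono.measurable
      η (c₃'/(2*η)) (Real.log 2 / η) hrη (by positivity) ?_
    intro t ht
    have ht0 : (0:ℝ) ≤ t := le_trans (le_max_right _ 0) ht
    have htM : Real.log 2 / η ≤ t := le_trans (le_max_left _ 0) ht
    have h2exp : (2:ℝ) ≤ Real.exp (η * t) := by
      rw [show (2:ℝ) = Real.exp (Real.log 2) from (Real.exp_log two_pos).symm]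
      exact Real.exp_le_exp.mpr (by rw [div_le_iff₀ hη] at htM; linarith)
    have hcont : Continuous (fun ℓ => c₃' * Real.exp (η*ℓ)) :=
      continuous_const.mul (Real.continuous_exp.comp (continuous_const.mul continuous_id))
    have hInteg : IntegrableOn (fun ℓ => c₃' * Real.exp (η*ℓ)) (Set.Ioc 0 t) volume :=
      hcont.integrableOn_Ioc
    have hval : ∫ ℓ in Set.Ioc 0 t, c₃' * Real.exp (η * ℓ)
        = c₃' * ((Real.exp (η*t)-1)/η) := by
      rw [← intervalIntegral.integral_of_le ht0, intervalIntegral.integral_const_mul,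
        integral_exp_mul' η t hη.ne']
    calc ENNReal.ofReal (c₃'/(2*η) * Real.exp (η * t))
        ≤ ENNReal.ofReal (c₃' * ((Real.exp (η*t)-1)/η)) :=
          ENNReal.ofReal_le_ofReal (half_bound hη hc₃.le h2exp)
      _ = ∫⁻ ℓ in Set.Ioc 0 t, ENNReal.ofReal (c₃' * Real.exp (η * ℓ)) := by
          rw [← hval, ofReal_integral_eq_lintegral_ofReal hInteg
            (ae_of_all _ fun x => by positivity)]
      _ ≤ ∫⁻ ℓ in Set.Ioc 0 t, ENNReal.ofReal (C ℓ) := by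
          refine setLIntegral_mono hCm.ennreal_ofReal fun ℓ hℓ => ?_
          exact ENNReal.ofReal_le_ofReal (hClb ℓ hℓ.1.le)
  refine ⟨part1, part2, ?_⟩
  rcases le_total η r with h | h
  · exact Or.inl (part1 h)
  · exact Or.inr (part2 h)
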